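/- Fix positive integers P, M, k with k ≤ M, and P×M real matrices A, B with |A_{ij}| < 1 for all i, j. Then every solution of x_n = k-rank{A_{n̄,1}x_{n-1} + B_{n̄,1}, ..., A_{n̄,M}x_{n-M} + B_{n̄,M}}, where n̄ = 1 + ((n-1) mod P), converges to a unique P-periodic orbit independent of the initial condition. -/

import Mathlib

set_option linter.unusedVariables false
set_option linter.unusedSectionVars false

/-- The `k`-rank of a vector: its `k`-th largest entry (1-indexed, with multiplicity). -/
noncomputable def krank (M k : ℕ) (v : Fin M → ℝ) : ℝ :=
  ((List.ofFn v).insertionSort (· ≥ ·)).getD (k - 1) 0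

lemma sorted_count_ge (l : List ℝ) (hl : l.Pairwise (· ≥ ·)) :
    ∀ i (h : i < l.length), i + 1 ≤ l.countP (fun x => decide (l[i] ≤ x)) := by
  induction l with
  | nil => simp
  | cons a tl ih =>
    intro i h
    match i with
    | 0 =>
      have : decide ((a :: tl)[0] ≤ a) = true := by simp
      rw [List.countP_cons, this]
      simp
    | Nat.succ j =>
      have htl : tl.Pairwise (· ≥ ·) := hl.of_cons
      have hj : j < tl.length := by simpa using h
      have hih := ih htl j hj
      have hget : (a :: tl)[j+1] = tl[j] := by simp
      have hpa : decide ((a :: tl)[j+1] ≤ a) = true := by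
        simp only [hget, decide_eq_true_eq]
        exact List.rel_of_pairwise_cons hl (tl.getElem_mem hj)
      rw [List.countP_cons, hpa, hget]
      simpa using Nat.add_le_add_right hih 1

lemma sorted_le_getElem (l : List ℝ) (hl : l.Pairwise (· ≥ ·)) (t : ℝ) :
    ∀ i (h : i < l.length), i + 1 ≤ l.countP (fun x => decide (t ≤ x)) → t ≤ l[i] := by
  induction l with
  | nil => simp
  | cons a tl ih =>
    intro i h hcount
    match i with
    | 0 =>
      have hpos : 0 < (a :: tl).countP (fun x => decide (t ≤ x)) := lt_of_lt_of_le (by omega) hcount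
      obtain ⟨x, hxmem, hx⟩ := List.countP_pos_iff.mp hpos
      have hx' : t ≤ x := by simpa using hx
      rcases List.mem_cons.mp hxmem with rfl | hxtl
      · simpa using hx'
      · have : a ≥ x := List.rel_of_pairwise_cons hl hxtl
        simpa using le_trans hx' this
    | Nat.succ j =>
      have hj : j < tl.length := by simpa using h
      have : j + 1 ≤ tl.countP (fun x => decide (t ≤ x)) := by
        rw [List.countP_cons] at hcount
        by_cases hpa : decide (t ≤ a) = true <;> simp [hpa] at hcount <;> omega
      have := ih hl.of_cons j hj this
      simpa using this

lemma krank_mono (M k : ℕ) (hk1 : 1 ≤ k) (hkM : k ≤ M) {v w : Fin M → ℝ}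
    (hvw : ∀ j, v j ≤ w j) : krank M k v ≤ krank M k w := by
  have hkm : k - 1 < M := by omega
  set lv := (List.ofFn v).insertionSort (· ≥ ·) with hlv
  set lw := (List.ofFn w).insertionSort (· ≥ ·) with hlw
  have hlenv : lv.length = M := by rw [hlv, List.length_insertionSort, List.length_ofFn]
  have hlenw : lw.length = M := by rw [hlw, List.length_insertionSort, List.length_ofFn]
  have hiv : k - 1 < lv.length := by omega
  have hiw : k - 1 < lw.length := by omega
  rw [krank, krank, List.getD_eq_getElem _ _ hiv, List.getD_eq_getElem _ _ hiw]
  set t := lv[k-1] with ht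
  have h1 : k - 1 + 1 ≤ lv.countP (fun x => decide (t ≤ x)) := sorted_count_ge lv
    (List.pairwise_insertionSort _ _) (k-1) hiv
  have h2 : lv.countP (fun x => decide (t ≤ x)) = (List.ofFn v).countP (fun x => decide (t ≤ x)) :=
    (List.perm_insertionSort _ _).countP_eq _
  have h3 : (List.ofFn v).countP (fun x => decide (t ≤ x)) ≤
      (List.ofFn w).countP (fun x => decide (t ≤ x)) := by
    rw [List.ofFn_eq_map, List.ofFn_eq_map, List.countP_map, List.countP_map]
    apply List.countP_mono_left
    intro j _ hj
    simp only [Function.comp, decide_eq_true_eq] at hj ⊢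
    exact le_trans hj (hvw j)
  have h4 : (List.ofFn w).countP (fun x => decide (t ≤ x)) = lw.countP (fun x => decide (t ≤ x)) :=
    ((List.perm_insertionSort _ _).countP_eq _).symm
  exact sorted_le_getElem lw (List.pairwise_insertionSort _ _) t (k-1) hiw (by omega)

lemma krank_add_const (M k : ℕ) (hk1 : 1 ≤ k) (hkM : k ≤ M) (v : Fin M → ℝ) (c : ℝ) :
    krank M k (fun j => v j + c) = krank M k v + c := by
  have hkey : (List.ofFn (fun j => v j + c)).insertionSort (· ≥ ·) =
      List.map (· + c) ((List.ofFn v).insertionSort (· ≥ ·)) := by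
    have p1 : ((List.ofFn (fun j => v j + c)).insertionSort (· ≥ ·)).Perm
        (List.ofFn (fun j => v j + c)) := List.perm_insertionSort _ _
    have e1 : List.ofFn (fun j => v j + c) = List.map (· + c) (List.ofFn v) := by
      rw [List.map_ofFn]; rfl
    have p2 : (List.map (· + c) (List.ofFn v)).Perm
        (List.map (· + c) ((List.ofFn v).insertionSort (· ≥ ·))) :=
      ((List.perm_insertionSort _ _).map _).symm
    refine List.Perm.eq_of_pairwise' (r := (· ≥ ·)) ?_ ?_ ((p1.trans (e1 ▸ List.Perm.refl _)).trans p2)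
    · exact List.pairwise_insertionSort _ _
    · rw [List.pairwise_map]
      exact (List.pairwise_insertionSort _ _).imp (fun h => by simpa using h)
  have hlen : k - 1 < ((List.ofFn v).insertionSort (· ≥ ·)).length := by
    rw [List.length_insertionSort, List.length_ofFn]; omega
  have hlen2 : k - 1 < ((List.ofFn (fun j => v j + c)).insertionSort (· ≥ ·)).length := by
    rw [List.length_insertionSort, List.length_ofFn]; omega
  rw [krank, krank, List.getD_eq_getElem _ _ hlen2, List.getD_eq_getElem _ _ hlen]
  simp only [hkey, List.getElem_map]

lemma abs_krank_sub_le (M k : ℕ) (hk1 : 1 ≤ k) (hkM : k ≤ M) {v w : Fin M → ℝ} {c : ℝ}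
    (h : ∀ j, |v j - w j| ≤ c) : |krank M k v - krank M k w| ≤ c := by
  rw [abs_sub_le_iff]
  constructor
  · have : krank M k v ≤ krank M k w + c := by
      rw [← krank_add_const M k hk1 hkM w c]
      exact krank_mono M k hk1 hkM fun j => by have := abs_le.mp (h j); linarith [this.2]
    linarith
  · have : krank M k w ≤ krank M k v + c := by
      rw [← krank_add_const M k hk1 hkM v c]
      exact krank_mono M k hk1 hkM fun j => by have := abs_le.mp (h j); linarith [(abs_le.mp (h j)).1]
    linarith

noncomputable def stepFn (M k : ℕ) (a b : Fin M → ℝ) (s : Fin M → ℝ) : Fin M → ℝ :=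
  fun j => if _ : (j : ℕ) = 0 then krank M k (fun i => a i * s i + b i)
           else s ⟨(j : ℕ) - 1, by have := j.isLt; omega⟩

noncomputable def iterFn (M k : ℕ) (a b : ℕ → Fin M → ℝ) : ℕ → ℕ → (Fin M → ℝ) → (Fin M → ℝ)
  | _, 0, s => s
  | n, m+1, s => stepFn M k (a (n+m)) (b (n+m)) (iterFn M k a b n m s)

section dyn

variable {M k : ℕ} (hM : 1 ≤ M) (hk1 : 1 ≤ k) (hkM : k ≤ M)
variable {a b : ℕ → Fin M → ℝ} {α : ℝ} (hα0 : 0 ≤ α) (hα : α < 1)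
variable (ha : ∀ n i, |a n i| ≤ α)

lemma stepFn_succ (av bv : Fin M → ℝ) (s : Fin M → ℝ) (j : Fin M) (hj : (j : ℕ) ≠ 0) :
    stepFn M k av bv s j = s ⟨(j : ℕ) - 1, by have := j.isLt; omega⟩ := by
  simp [stepFn, hj]

lemma stepFn_zero (av bv : Fin M → ℝ) (s : Fin M → ℝ) (j : Fin M) (hj : (j : ℕ) = 0) :
    stepFn M k av bv s j = krank M k (fun i => av i * s i + bv i) := by
  simp [stepFn, hj]

include hk1 hkM hα0 hα in
lemma abs_stepFn_zero_sub (av bv : Fin M → ℝ) (hav : ∀ i, |av i| ≤ α) (s t : Fin M → ℝ)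
    (j : Fin M) (hj : (j : ℕ) = 0) :
    |stepFn M k av bv s j - stepFn M k av bv t j| ≤ α * dist s t := by
  rw [stepFn_zero _ _ _ _ hj, stepFn_zero _ _ _ _ hj]
  apply abs_krank_sub_le M k hk1 hkM
  intro i
  have h1 : |av i * s i + bv i - (av i * t i + bv i)| = |av i| * |s i - t i| := by
    rw [← abs_mul]; ring_nf
  rw [h1]
  have h2 : |s i - t i| ≤ dist s t := by
    rw [← Real.dist_eq]; exact dist_le_pi_dist s t i
  exact mul_le_mul (hav i) h2 (abs_nonneg _) hα0

include hk1 hkM hα0 hα ha in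
lemma dist_stepFn_le (n : ℕ) (s t : Fin M → ℝ) :
    dist (stepFn M k (a n) (b n) s) (stepFn M k (a n) (b n) t) ≤ dist s t := by
  rw [dist_pi_le_iff dist_nonneg]
  intro j
  by_cases hj : (j : ℕ) = 0
  · rw [Real.dist_eq]
    calc |stepFn M k (a n) (b n) s j - stepFn M k (a n) (b n) t j| ≤ α * dist s t :=
          abs_stepFn_zero_sub hk1 hkM hα0 hα _ _ (ha n) s t j hj
      _ ≤ 1 * dist s t := mul_le_mul_of_nonneg_right (le_of_lt hα) dist_nonneg
      _ = dist s t := one_mul _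
  · rw [stepFn_succ _ _ _ _ hj, stepFn_succ _ _ _ _ hj]
    exact dist_le_pi_dist s t _

include hk1 hkM hα0 hα ha in
lemma dist_iterFn_le (n m : ℕ) (s t : Fin M → ℝ) :
    dist (iterFn M k a b n m s) (iterFn M k a b n m t) ≤ dist s t := by
  induction m with
  | zero => simp [iterFn]
  | succ m ih =>
    calc dist (iterFn M k a b n (m+1) s) (iterFn M k a b n (m+1) t)
        ≤ dist (iterFn M k a b n m s) (iterFn M k a b n m t) :=
          dist_stepFn_le hk1 hkM hα0 hα ha _ _ _
      _ ≤ dist s t := ih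

include hk1 hkM hα0 hα ha in
lemma abs_iterFn_contract_coord (m n : ℕ) (s t : Fin M → ℝ) :
    ∀ j : Fin M, (j : ℕ) < m →
      |iterFn M k a b n m s j - iterFn M k a b n m t j| ≤ α * dist s t := by
  induction m with
  | zero => intro j hj; omega
  | succ m ih =>
    intro j hj
    by_cases hj0 : (j : ℕ) = 0
    · show |stepFn M k (a (n+m)) (b (n+m)) _ j - stepFn M k (a (n+m)) (b (n+m)) _ j| ≤ _
      calc |stepFn M k (a (n+m)) (b (n+m)) (iterFn M k a b n m s) j -
            stepFn M k (a (n+m)) (b (n+m)) (iterFn M k a b n m t) j|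
          ≤ α * dist (iterFn M k a b n m s) (iterFn M k a b n m t) :=
            abs_stepFn_zero_sub hk1 hkM hα0 hα _ _ (ha (n+m)) _ _ j hj0
        _ ≤ α * dist s t := mul_le_mul_of_nonneg_left
            (dist_iterFn_le hk1 hkM hα0 hα ha n m s t) hα0
    · show |stepFn M k (a (n+m)) (b (n+m)) _ j - stepFn M k (a (n+m)) (b (n+m)) _ j| ≤ _
      rw [stepFn_succ _ _ _ _ hj0, stepFn_succ _ _ _ _ hj0]
      exact ih ⟨(j : ℕ) - 1, by have := j.isLt; omega⟩ (by simp; omega)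

include hk1 hkM hα0 hα ha in
lemma dist_iterFn_contract (hM : 1 ≤ M) (n m : ℕ) (hm : M ≤ m) (s t : Fin M → ℝ) :
    dist (iterFn M k a b n m s) (iterFn M k a b n m t) ≤ α * dist s t := by
  rw [dist_pi_le_iff (mul_nonneg hα0 dist_nonneg)]
  intro j
  rw [Real.dist_eq]
  exact abs_iterFn_contract_coord hk1 hkM hα0 hα ha m n s t j (by have := j.isLt; omega)

lemma iterFn_add (n m1 m2 : ℕ) (s : Fin M → ℝ) :
    iterFn M k a b n (m1 + m2) s = iterFn M k a b (n + m1) m2 (iterFn M k a b n m1 s) := by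
  induction m2 with
  | zero => rfl
  | succ m2 ih =>
    show iterFn M k a b n ((m1 + m2) + 1) s = _
    show stepFn M k (a (n + (m1 + m2))) (b (n + (m1 + m2))) (iterFn M k a b n (m1 + m2) s) = _
    rw [ih]
    show _ = stepFn M k (a ((n + m1) + m2)) (b ((n + m1) + m2)) _
    rw [← Nat.add_assoc]

lemma iterFn_congr_phase {a' b' : ℕ → Fin M → ℝ} (n n' : ℕ)
    (han : ∀ i, a (n + i) = a' (n' + i)) (hbn : ∀ i, b (n + i) = b' (n' + i)) (m : ℕ)
    (s : Fin M → ℝ) : iterFn M k a b n m s = iterFn M k a' b' n' m s := by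
  induction m with
  | zero => rfl
  | succ m ih =>
    show stepFn M k (a (n + m)) (b (n + m)) (iterFn M k a b n m s) = _
    rw [han m, hbn m, ih]
    rfl

include hk1 hkM hα0 hα ha in
lemma dist_iterFn_pow (hM : 1 ≤ M) {L : ℕ} (hL : M ≤ L) (n q : ℕ) (s t : Fin M → ℝ) :
    dist (iterFn M k a b n (q * L) s) (iterFn M k a b n (q * L) t) ≤ α ^ q * dist s t := by
  induction q with
  | zero => simp [iterFn]
  | succ q ih =>
    have : (q + 1) * L = q * L + L := by ring
    rw [this, iterFn_add, iterFn_add]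
    calc dist (iterFn M k a b (n + q*L) L (iterFn M k a b n (q*L) s))
          (iterFn M k a b (n + q*L) L (iterFn M k a b n (q*L) t))
        ≤ α * dist (iterFn M k a b n (q*L) s) (iterFn M k a b n (q*L) t) :=
          dist_iterFn_contract hk1 hkM hα0 hα ha hM _ _ hL _ _
      _ ≤ α * (α ^ q * dist s t) := mul_le_mul_of_nonneg_left ih hα0
      _ = α ^ (q + 1) * dist s t := by ring

include hk1 hkM hα0 hα ha in
lemma dist_iterFn_div (hM : 1 ≤ M) {L : ℕ} (hL : M ≤ L) (n m : ℕ) (s t : Fin M → ℝ) :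
    dist (iterFn M k a b n m s) (iterFn M k a b n m t) ≤ α ^ (m / L) * dist s t := by
  have hm : m = (m / L) * L + m % L := by rw [Nat.mul_comm, Nat.div_add_mod]
  calc dist (iterFn M k a b n m s) (iterFn M k a b n m t)
      = dist (iterFn M k a b (n + (m/L)*L) (m % L) (iterFn M k a b n ((m/L)*L) s))
          (iterFn M k a b (n + (m/L)*L) (m % L) (iterFn M k a b n ((m/L)*L) t)) := by
        rw [← iterFn_add, ← iterFn_add, ← hm]
    _ ≤ dist (iterFn M k a b n ((m/L)*L) s) (iterFn M k a b n ((m/L)*L) t) :=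
        dist_iterFn_le hk1 hkM hα0 hα ha _ _ _ _
    _ ≤ α ^ (m / L) * dist s t := dist_iterFn_pow hk1 hkM hα0 hα ha hM hL n _ s t

end dyn

theorem affine_rank_type_periodic (M P k : ℕ) (hM : 1 ≤ M) (hP : 1 ≤ P)
    (hk1 : 1 ≤ k) (hkM : k ≤ M)
    (A B : Fin P → Fin M → ℝ)
    (α : ℝ) (hα : α < 1) (hA : ∀ i j, |A i j| ≤ α)
    (hAij : ∀ i j, |A i j| < 1) :
    ∃! xs : ℕ → ℝ,
      (∀ n, xs (n + P) = xs n) ∧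
      (∀ x : ℕ → ℝ,
        (∀ n, M + 1 ≤ n → x n = krank M k (fun j : Fin M =>
          A ⟨(n - 1) % P, Nat.mod_lt _ hP⟩ j * x (n - 1 - (j : ℕ)) +
          B ⟨(n - 1) % P, Nat.mod_lt _ hP⟩ j)) →
        Filter.Tendsto (fun n => x n - xs n) Filter.atTop (nhds 0)) := by
  have hM0 : 0 < M := hM
  have hα0 : 0 ≤ α := le_trans (abs_nonneg _) (hA ⟨0, hP⟩ ⟨0, hM⟩)
  set a : ℕ → Fin M → ℝ := fun n => A ⟨n % P, Nat.mod_lt _ hP⟩ with ha_def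
  set b : ℕ → Fin M → ℝ := fun n => B ⟨n % P, Nat.mod_lt _ hP⟩ with hb_def
  have haα : ∀ n i, |a n i| ≤ α := fun n i => hA _ i
  set L : ℕ := M * P with hL_def
  have hLM : M ≤ L := Nat.le_mul_of_pos_right M hP
  have hL1 : 1 ≤ L := le_trans hM hLM
  -- phase-shift invariance
  have hphase : ∀ (q n m : ℕ) (s : Fin M → ℝ),
      iterFn M k a b (n + q * P) m s = iterFn M k a b n m s := by
    intro q n m s
    apply iterFn_congr_phase
    · intro i
      rw [ha_def]
      have : n + q * P + i = (n + i) + q * P := by ring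
      simp only [this, Nat.add_mul_mod_self_right]
    · intro i
      rw [hb_def]
      have : n + q * P + i = (n + i) + q * P := by ring
      simp only [this, Nat.add_mul_mod_self_right]
  have hPshift : ∀ (n m : ℕ) (s : Fin M → ℝ),
      iterFn M k a b (n + P) m s = iterFn M k a b n m s := by
    intro n m s
    have := hphase 1 n m s
    rwa [one_mul] at this
  -- the contraction
  set G : (Fin M → ℝ) → (Fin M → ℝ) := fun s => iterFn M k a b 0 L s with hG_def
  have hC : ContractingWith α.toNNReal G := by
    constructor
    · rw [← Real.toNNReal_one]
      exact (Real.toNNReal_lt_toNNReal_iff one_pos).mpr hα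
    · apply LipschitzWith.of_dist_le_mul
      intro s t
      rw [Real.coe_toNNReal _ hα0]
      exact dist_iterFn_contract hk1 hkM hα0 hα haα hM 0 L hLM s t
  set st : Fin M → ℝ := ContractingWith.fixedPoint G hC with hst_def
  have hfix : iterFn M k a b 0 L st = st := hC.fixedPoint_isFixedPt
  set xs : ℕ → ℝ := fun n => iterFn M k a b 0 n st ⟨0, hM0⟩ with hxs_def
  -- periodicity with period L
  have hyL : ∀ n, iterFn M k a b 0 (n + L) st = iterFn M k a b 0 n st := by
    intro n
    rw [show n + L = L + n by omega, iterFn_add, hfix, Nat.zero_add]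
    rw [show L = 0 + M * P by omega]
    exact hphase M 0 n st
  have iterFn_succ : ∀ (n m : ℕ) (s : Fin M → ℝ),
      iterFn M k a b n (m+1) s = stepFn M k (a (n+m)) (b (n+m)) (iterFn M k a b n m s) :=
    fun n m s => rfl
  -- y P is a fixed point, so period P
  have hPfixed : iterFn M k a b 0 P st = st := by
    apply hC.fixedPoint_unique
    show iterFn M k a b 0 L (iterFn M k a b 0 P st) = iterFn M k a b 0 P st
    have e1 : iterFn M k a b 0 (P + L) st = iterFn M k a b (0 + P) L (iterFn M k a b 0 P st) :=
      iterFn_add 0 P L st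
    rw [Nat.zero_add] at e1
    have e2 := hPshift 0 L (iterFn M k a b 0 P st)
    rw [Nat.zero_add] at e2
    calc iterFn M k a b 0 L (iterFn M k a b 0 P st)
        = iterFn M k a b P L (iterFn M k a b 0 P st) := e2.symm
      _ = iterFn M k a b 0 (P + L) st := e1.symm
      _ = iterFn M k a b 0 P st := hyL P
  have hper : ∀ n, xs (n + P) = xs n := by
    intro n
    show iterFn M k a b 0 (n + P) st ⟨0, hM0⟩ = iterFn M k a b 0 n st ⟨0, hM0⟩
    have e1 : iterFn M k a b 0 (P + n) st = iterFn M k a b (0 + P) n (iterFn M k a b 0 P st) :=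
      iterFn_add 0 P n st
    rw [Nat.zero_add, hPfixed] at e1
    have e2 := hPshift 0 n st
    rw [Nat.zero_add] at e2
    rw [show n + P = P + n by omega, e1, e2]
  -- trajectory coherence
  have htraj : ∀ (m : ℕ) (j : Fin M), (j : ℕ) ≤ m →
      iterFn M k a b 0 m st j = xs (m - (j : ℕ)) := by
    intro m
    induction m with
    | zero =>
      intro j hj
      have hje : (j : ℕ) = 0 := Nat.le_zero.mp hj
      have hj0 : j = ⟨0, hM0⟩ := Fin.ext (by rw [hje])
      rw [hj0]
      simp only [hxs_def]
    | succ m ih =>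
      intro j hj
      by_cases hj0 : (j : ℕ) = 0
      · have hj0' : j = ⟨0, hM0⟩ := Fin.ext hj0
        rw [hj0']
        show iterFn M k a b 0 (m+1) st ⟨0, hM0⟩ = xs (m + 1 - 0)
        rfl
      · rw [iterFn_succ, stepFn_succ _ _ _ _ hj0,
          ih ⟨(j : ℕ) - 1, by have := j.isLt; omega⟩ (by
            show (j : ℕ) - 1 ≤ m; omega)]
        congr 1
        show m - ((j : ℕ) - 1) = m + 1 - (j : ℕ)
        omega
  -- xs is itself a solution
  have hsol : ∀ n, M + 1 ≤ n → xs n = krank M k (fun j : Fin M =>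
      A ⟨(n - 1) % P, Nat.mod_lt _ hP⟩ j * xs (n - 1 - (j : ℕ)) +
      B ⟨(n - 1) % P, Nat.mod_lt _ hP⟩ j) := by
    intro n hn
    obtain ⟨m, rfl⟩ : ∃ m, n = m + 1 := ⟨n - 1, by omega⟩
    have hm : M ≤ m := by omega
    show iterFn M k a b 0 (m + 1) st ⟨0, hM0⟩ = _
    rw [iterFn_succ, stepFn_zero _ _ _ _ (by rfl : ((⟨0, hM0⟩ : Fin M) : ℕ) = 0)]
    congr 1
    funext i
    rw [htraj m i (le_trans (le_of_lt i.isLt) hm)]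
    have e2 : m + 1 - 1 = m := by omega
    rw [e2, Nat.zero_add, ha_def, hb_def]
  -- convergence of arbitrary solutions
  have hconv : ∀ x : ℕ → ℝ,
      (∀ n, M + 1 ≤ n → x n = krank M k (fun j : Fin M =>
        A ⟨(n - 1) % P, Nat.mod_lt _ hP⟩ j * x (n - 1 - (j : ℕ)) +
        B ⟨(n - 1) % P, Nat.mod_lt _ hP⟩ j)) →
      Filter.Tendsto (fun n => x n - xs n) Filter.atTop (nhds 0) := by
    intro x hx
    set u : Fin M → ℝ := fun j => x (M - (j : ℕ)) with hu_def
    set sM : Fin M → ℝ := iterFn M k a b 0 M st with hsM_def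
    have htrajx : ∀ (t : ℕ) (j : Fin M), iterFn M k a b M t u j = x (M + t - (j : ℕ)) := by
      intro t
      induction t with
      | zero =>
        intro j
        show u j = x (M + 0 - (j : ℕ))
        rw [hu_def, Nat.add_zero]
      | succ t ih =>
        intro j
        by_cases hj0 : (j : ℕ) = 0
        · rw [iterFn_succ, stepFn_zero _ _ _ _ hj0]
          have hxn := hx (M + t + 1) (by omega)
          rw [show M + (t + 1) - (j : ℕ) = M + t + 1 by omega, hxn]
          congr 1
          funext i
          have e1 : M + t + 1 - 1 = M + t := by omega
          rw [e1, ih i, ha_def, hb_def]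
        · rw [iterFn_succ, stepFn_succ _ _ _ _ hj0,
            ih ⟨(j : ℕ) - 1, by have := j.isLt; omega⟩]
          congr 1
          show M + t - ((j : ℕ) - 1) = M + (t + 1) - (j : ℕ)
          have := j.isLt
          omega
    have htrajxs : ∀ (t : ℕ) (j : Fin M), iterFn M k a b M t sM j = xs (M + t - (j : ℕ)) := by
      intro t j
      have e0 : iterFn M k a b 0 (M + t) st = iterFn M k a b (0 + M) t (iterFn M k a b 0 M st) :=
        iterFn_add 0 M t st
      rw [Nat.zero_add] at e0
      rw [hsM_def, ← e0]
      exact htraj (M + t) j (by have := j.isLt; omega)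
    have hbound : ∀ n, M ≤ n → |x n - xs n| ≤ α ^ ((n - M) / L) * dist u sM := by
      intro n hn
      obtain ⟨t, rfl⟩ : ∃ t, n = M + t := ⟨n - M, by omega⟩
      have h1 : x (M + t) = iterFn M k a b M t u ⟨0, hM0⟩ := by
        rw [htrajx t ⟨0, hM0⟩]; rfl
      have h2 : xs (M + t) = iterFn M k a b M t sM ⟨0, hM0⟩ := by
        rw [htrajxs t ⟨0, hM0⟩]; rfl
      rw [h1, h2, show M + t - M = t by omega]
      calc |iterFn M k a b M t u ⟨0, hM0⟩ - iterFn M k a b M t sM ⟨0, hM0⟩|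
          ≤ dist (iterFn M k a b M t u) (iterFn M k a b M t sM) := by
            rw [← Real.dist_eq]; exact dist_le_pi_dist _ _ _
        _ ≤ α ^ (t / L) * dist u sM :=
            dist_iterFn_div hk1 hkM hα0 hα haα hM hLM M t u sM
    have h1 : Filter.Tendsto (fun q : ℕ => α ^ q) Filter.atTop (nhds 0) :=
      tendsto_pow_atTop_nhds_zero_of_lt_one hα0 hα
    have hdiv : Filter.Tendsto (fun n : ℕ => n / L) Filter.atTop Filter.atTop :=
      (Filter.map_div_atTop_eq_nat L hL1).le
    have h2 : Filter.Tendsto (fun n : ℕ => (n - M) / L) Filter.atTop Filter.atTop :=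
      hdiv.comp (Filter.tendsto_sub_atTop_nat M)
    have h3 : Filter.Tendsto (fun n : ℕ => α ^ ((n - M) / L) * dist u sM)
        Filter.atTop (nhds 0) := by
      have := (h1.comp h2).mul_const (dist u sM)
      simpa using this
    apply squeeze_zero_norm' _ h3
    filter_upwards [Filter.eventually_ge_atTop M] with n hn
    simpa [Real.norm_eq_abs] using hbound n hn
  refine ⟨xs, ⟨hper, hconv⟩, ?_⟩
  rintro xs' ⟨hper', hconv'⟩
  have h := hconv' xs hsol
  funext n
  have hconst : ∀ m : ℕ, xs (n + m * P) - xs' (n + m * P) = xs n - xs' n := by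
    intro m
    induction m with
    | zero => simp
    | succ m ih => rw [show n + (m + 1) * P = (n + m * P) + P by ring, hper, hper', ih]
  have hsub : Filter.Tendsto (fun m : ℕ => n + m * P) Filter.atTop Filter.atTop := by
    apply Filter.tendsto_atTop_mono (f := fun m : ℕ => m) _ Filter.tendsto_id
    intro m
    calc m = m * 1 := (Nat.mul_one m).symm
      _ ≤ m * P := Nat.mul_le_mul_left m hP
      _ ≤ n + m * P := Nat.le_add_left _ _
  have h2 : Filter.Tendsto (fun m : ℕ => xs (n + m * P) - xs' (n + m * P))
      Filter.atTop (nhds 0) := h.comp hsub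
  rw [show (fun m : ℕ => xs (n + m * P) - xs' (n + m * P)) = fun _ => xs n - xs' n from
    funext hconst] at h2
  have h4 : xs n - xs' n = 0 := tendsto_nhds_unique tendsto_const_nhds h2
  linarith
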